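/- Let F be a countable family of compact nonempty sets in ℝ^d with designated centers, and let x₀ be a point such that for every ε > 0 and every m ∈ ℕ the subfamily of sets with center within distance ε of x₀ cannot be pierced by m k-flats. Then there exists a sequence (B_n) of members of F whose centers converge to x₀ and such that {B_n : n ∈ ℕ} cannot be pierced by finitely many k-flats. -/

import Mathlib

/-- A `k`-flat in `ℝ^d`: a nonempty affine subspace whose direction has dimension `k`. -/
def IsKFlat (d k : ℕ) (J : AffineSubspace ℝ (EuclideanSpace ℝ (Fin d))) : Prop :=
  (J : Set (EuclideanSpace ℝ (Fin d))).Nonempty ∧ Module.finrank ℝ J.direction = k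


open Filter

noncomputable section
variable {d k : ℕ}
local notation "E" => EuclideanSpace ℝ (Fin d)

def flatOf (p : E) (L : Fin k → E) : AffineSubspace ℝ E :=
  AffineSubspace.mk' p (Submodule.span ℝ (Set.range L))

lemma mem_flatOf_iff {p : E} {L : Fin k → E} (hL : Orthonormal ℝ L) {y : E} :
    y ∈ flatOf p L ↔ y = p + ∑ l, (inner ℝ (y - p) (L l) : ℝ) • L l := by
  rw [flatOf, AffineSubspace.mem_mk', vsub_eq_sub,
    Submodule.mem_span_range_iff_exists_fun]
  constructor
  · rintro ⟨c, hc⟩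
    have : ∀ l, (inner ℝ (y - p) (L l) : ℝ) = c l := by
      intro l
      rw [← hc, real_inner_comm, hL.inner_right_fintype]
    simp_rw [this, hc]
    abel
  · intro h
    refine ⟨fun l => (inner ℝ (y - p) (L l) : ℝ), ?_⟩
    simp only
    rw [eq_comm, sub_eq_iff_eq_add']
    exact h

lemma isKFlat_flatOf {p : E} {L : Fin k → E} (hL : Orthonormal ℝ L) :
    IsKFlat d k (flatOf p L) := by
  constructor
  · exact ⟨p, AffineSubspace.self_mem_mk' _ _⟩
  · rw [flatOf, AffineSubspace.direction_mk']
    simpa using finrank_span_eq_card hL.linearIndependent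

lemma exists_flatOf_eq {J : AffineSubspace ℝ E} (hJ : IsKFlat d k J) {x : E} (hx : x ∈ J) :
    ∃ L : Fin k → E, Orthonormal ℝ L ∧ J = flatOf x L := by
  have hfd : FiniteDimensional ℝ J.direction := inferInstance
  let b := (stdOrthonormalBasis ℝ J.direction).reindex (finCongr hJ.2)
  refine ⟨fun l => (b l : E), ?_, ?_⟩
  · simp only [orthonormal_iff_ite]
    intro i j
    have := b.orthonormal
    rw [orthonormal_iff_ite] at this
    simpa [Submodule.coe_inner] using this i j
  · have hspan : Submodule.span ℝ (Set.range fun l => ((b l : J.direction) : E)) = J.direction := by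
      have : (Set.range fun l => ((b l : J.direction) : E)) = (J.direction.subtype) '' (Set.range b) := by
        ext y; simp
      rw [this, ← Submodule.map_span]
      have hbs : Submodule.span ℝ (Set.range ⇑b) = ⊤ := b.toBasis.span_eq ▸ by rw [b.coe_toBasis]
      rw [hbs]
      simp [Submodule.map_subtype_top J.direction]
    refine AffineSubspace.ext_of_direction_eq ?_ ⟨x, hx, AffineSubspace.self_mem_mk' _ _⟩
    rw [flatOf, AffineSubspace.direction_mk', hspan]

lemma isCompact_frames : IsCompact {L : Fin k → E | Orthonormal ℝ L} := by
  apply Metric.isCompact_of_isClosed_isBounded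
  · have : {L : Fin k → E | Orthonormal ℝ L} =
        ⋂ (i) (j), {L : Fin k → E | (inner ℝ (L i) (L j) : ℝ) = if i = j then 1 else 0} := by
      ext L; simp [orthonormal_iff_ite, Set.mem_iInter]
    rw [this]
    refine isClosed_iInter fun i => isClosed_iInter fun j => ?_
    exact isClosed_eq (Continuous.inner (continuous_apply i) (continuous_apply j)) continuous_const
  · rw [Metric.isBounded_iff_subset_closedBall 0]
    refine ⟨1, fun L hL => ?_⟩
    simp only [Metric.mem_closedBall, dist_zero_right]
    rw [pi_norm_le_iff_of_nonneg zero_le_one]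
    intro i
    simp [hL.1 i]

lemma pierce_compactness (B : ℕ → Set E) (hcomp : ∀ n, IsCompact (B n)) :
    ∀ (m : ℕ) (S : Set ℕ),
    (∀ N, ∃ J : Fin m → AffineSubspace ℝ E, (∀ t, IsKFlat d k (J t)) ∧
      ∀ i ∈ S, i ≤ N → ∃ t, (B i ∩ (J t : Set E)).Nonempty) →
    ∃ J : Fin m → AffineSubspace ℝ E, (∀ t, IsKFlat d k (J t)) ∧
      ∀ i ∈ S, ∃ t, (B i ∩ (J t : Set E)).Nonempty := by
  intro m
  induction m with
  | zero =>
    intro S H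
    refine ⟨Fin.elim0, fun t => t.elim0, fun i hi => ?_⟩
    obtain ⟨J, _, hJ⟩ := H i
    exact absurd (hJ i hi le_rfl) (by simp)
  | succ m IH =>
    intro S H
    rcases Set.eq_empty_or_nonempty S with hS | ⟨i₀, hi₀⟩
    · obtain ⟨J, hJ1, _⟩ := H 0
      exact ⟨J, hJ1, fun i hi => absurd hi (hS ▸ Set.notMem_empty i)⟩
    -- normalize: flat at index 0 meets B i₀
    have hK : ∀ N : ℕ, ∃ J : Fin (m+1) → AffineSubspace ℝ E,
        (∀ t, IsKFlat d k (J t)) ∧ (∀ i ∈ S, i ≤ N → ∃ t, (B i ∩ (J t : Set E)).Nonempty) ∧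
        (B i₀ ∩ (J 0 : Set E)).Nonempty := by
      intro N
      obtain ⟨J, hJ1, hJ2⟩ := H (max N i₀)
      obtain ⟨t₀, ht₀⟩ := hJ2 i₀ hi₀ (le_max_right _ _)
      refine ⟨J ∘ Equiv.swap 0 t₀, fun t => hJ1 _, fun i hi hiN => ?_, ?_⟩
      · obtain ⟨t, ht⟩ := hJ2 i hi (le_trans hiN (le_max_left _ _))
        exact ⟨Equiv.swap 0 t₀ t, by simpa using ht⟩
      · simpa [Equiv.swap_apply_left] using ht₀
    choose K hK1 hK2 hK3 using hK
    -- parametrize K N 0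
    have hparam : ∀ N, ∃ x : E, ∃ L : Fin k → E, x ∈ B i₀ ∧ Orthonormal ℝ L ∧
        K N 0 = flatOf x L := by
      intro N
      obtain ⟨x, hxB, hxJ⟩ := hK3 N
      obtain ⟨L, hL, hEq⟩ := exists_flatOf_eq (hK1 N 0) hxJ
      exact ⟨x, L, hxB, hL, hEq⟩
    choose x L hxB hLon hKeq using hparam
    -- compactness of parameter space
    have hXcomp : IsCompact ((B i₀) ×ˢ {L : Fin k → E | Orthonormal ℝ L}) :=
      (hcomp i₀).prod isCompact_frames
    obtain ⟨⟨xb, Lb⟩, hab, φ, hφ, hconv⟩ :=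
      hXcomp.tendsto_subseq (x := fun N => (x N, L N)) (fun N => ⟨hxB N, hLon N⟩)
    have hxbB : xb ∈ B i₀ := hab.1
    have hLbon : Orthonormal ℝ Lb := hab.2
    have hconvx : Tendsto (fun N => x (φ N)) atTop (nhds xb) :=
      (continuous_fst.tendsto _).comp hconv
    have hconvL : Tendsto (fun N => L (φ N)) atTop (nhds Lb) :=
      (continuous_snd.tendsto _).comp hconv
    set Jinf : AffineSubspace ℝ E := flatOf xb Lb with hJinf
    have hJinfK : IsKFlat d k Jinf := isKFlat_flatOf hLbon
    set A : Set ℕ := {i | ∃ᶠ N in atTop, (B i ∩ (K (φ N) 0 : Set E)).Nonempty} with hA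
    -- Claim 1: members of A are pierced by Jinf
    have claim1 : ∀ i ∈ A, (B i ∩ (Jinf : Set E)).Nonempty := by
      intro i hi
      obtain ⟨ψ, hψ, hψP⟩ := extraction_of_frequently_atTop hi
      choose y hyB hyJ using hψP
      obtain ⟨yb, hybB, χ, hχ, hyconv⟩ := (hcomp i).tendsto_subseq hyB
      refine ⟨yb, hybB, ?_⟩
      rw [SetLike.mem_coe, mem_flatOf_iff hLbon]
      have hmemn : ∀ n, y (χ n) = x (φ (ψ (χ n))) +
          ∑ l, (inner ℝ (y (χ n) - x (φ (ψ (χ n)))) (L (φ (ψ (χ n))) l) : ℝ) •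
            L (φ (ψ (χ n))) l := by
        intro n
        have := hyJ (χ n)
        rw [hKeq, SetLike.mem_coe, mem_flatOf_iff (hLon _)] at this
        exact this
      -- take limits
      have hxc : Tendsto (fun n => x (φ (ψ (χ n)))) atTop (nhds xb) :=
        hconvx.comp ((hψ.comp hχ).tendsto_atTop)
      have hLc : Tendsto (fun n => L (φ (ψ (χ n)))) atTop (nhds Lb) :=
        hconvL.comp ((hψ.comp hχ).tendsto_atTop)
      have hLcl : ∀ l, Tendsto (fun n => L (φ (ψ (χ n))) l) atTop (nhds (Lb l)) :=
        fun l => ((continuous_apply l).tendsto _).comp hLc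
      have hRHS : Tendsto (fun n => x (φ (ψ (χ n))) +
          ∑ l, (inner ℝ (y (χ n) - x (φ (ψ (χ n)))) (L (φ (ψ (χ n))) l) : ℝ) •
            L (φ (ψ (χ n))) l) atTop
          (nhds (xb + ∑ l, (inner ℝ (yb - xb) (Lb l) : ℝ) • Lb l)) := by
        refine hxc.add (tendsto_finset_sum _ fun l _ => Tendsto.smul ?_ (hLcl l))
        exact Tendsto.inner (hyconv.sub hxc) (hLcl l)
      have : Tendsto (fun n => y (χ n)) atTop (nhds yb) := hyconv
      exact tendsto_nhds_unique this (by simpa only [← hmemn] using hRHS)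
    -- Claim 2: the rest is pierceable by m flats at every level
    have claim2 : ∀ N, ∃ J : Fin m → AffineSubspace ℝ E, (∀ t, IsKFlat d k (J t)) ∧
        ∀ i ∈ S \ A, i ≤ N → ∃ t, (B i ∩ (J t : Set E)).Nonempty := by
      intro N
      have hfin : ((S \ A) ∩ Set.Iic N).Finite :=
        (Set.finite_Iic N).subset (Set.inter_subset_right)
      have hev : ∀ᶠ M in atTop, ∀ i ∈ (S \ A) ∩ Set.Iic N,
          ¬ (B i ∩ (K (φ M) 0 : Set E)).Nonempty := by
        rw [eventually_all_finite hfin]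
        intro i hi
        have : ¬ (∃ᶠ M in atTop, (B i ∩ (K (φ M) 0 : Set E)).Nonempty) := hi.1.2
        exact not_frequently.mp this
      obtain ⟨M₀, hM₀⟩ := hev.exists_forall_of_atTop
      set M := max M₀ N with hM
      refine ⟨fun t => K (φ M) t.succ, fun t => hK1 _ _, fun i hi hiN => ?_⟩
      have hiM : i ≤ φ M := le_trans (le_trans hiN (le_max_right M₀ N)) (hφ.le_apply)
      obtain ⟨t, ht⟩ := hK2 (φ M) i hi.1 hiM
      have ht0 : t ≠ 0 := by
        rintro rfl
        exact hM₀ M (le_max_left _ _) i ⟨hi, hiN⟩ ht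
      obtain ⟨s, rfl⟩ := Fin.eq_succ_of_ne_zero ht0
      exact ⟨s, ht⟩
    obtain ⟨J'', hJ''1, hJ''2⟩ := IH (S \ A) claim2
    refine ⟨Fin.cons Jinf J'', fun t => ?_, fun i hi => ?_⟩
    · refine Fin.cases ?_ ?_ t
      · simpa using hJinfK
      · intro s; simpa using hJ''1 s
    · by_cases hiA : i ∈ A
      · exact ⟨0, by simpa using claim1 i hiA⟩
      · obtain ⟨t, ht⟩ := hJ''2 i ⟨hi, hiA⟩
        exact ⟨t.succ, by simpa using ht⟩

open Classical in
lemma exists_witness (B : ℕ → Set E) (ctr : ℕ → E)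
    (hcomp : ∀ n, IsCompact (B n)) (x₀ : E)
    (hstrong : ∀ ε > 0, ∀ m : ℕ,
      ¬ ∃ P : Set (AffineSubspace ℝ E),
        P.Finite ∧ P.ncard ≤ m ∧ (∀ J ∈ P, IsKFlat d k J) ∧
        ∀ n, dist (ctr n) x₀ < ε → ∃ J ∈ P, (B n ∩ (J : Set E)).Nonempty)
    (m : ℕ) :
    ∃ T : Finset ℕ, T.Nonempty ∧ (∀ i ∈ T, dist (ctr i) x₀ < 1/(m+1)) ∧
      ¬ ∃ J : Fin m → AffineSubspace ℝ E, (∀ t, IsKFlat d k (J t)) ∧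
        ∀ i ∈ T, ∃ t, (B i ∩ (J t : Set E)).Nonempty := by
  set ε : ℝ := 1/(m+1) with hε
  have hεpos : (0:ℝ) < ε := by positivity
  set S : Set ℕ := {i | dist (ctr i) x₀ < ε} with hSdef
  -- S is nonempty
  have hSne : S.Nonempty := by
    by_contra hS
    rw [Set.not_nonempty_iff_eq_empty] at hS
    exact hstrong ε hεpos 0 ⟨∅, Set.finite_empty, by simp, by simp, fun n hn => by
        have : n ∈ S := hn
        rw [hS] at this
        exact absurd this (Set.notMem_empty n)⟩
  obtain ⟨n₀, hn₀⟩ := hSne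
  by_contra hno
  push_neg at hno
  -- every admissible finite set is pierceable by m flats; apply compactness
  have H : ∀ N, ∃ J : Fin m → AffineSubspace ℝ E, (∀ t, IsKFlat d k (J t)) ∧
      ∀ i ∈ S, i ≤ N → ∃ t, (B i ∩ (J t : Set E)).Nonempty := by
    intro N
    set T : Finset ℕ := insert n₀ ((Finset.range (N+1)).filter (fun i => dist (ctr i) x₀ < ε))
      with hT
    have hTd : ∀ i ∈ T, dist (ctr i) x₀ < ε := by
      intro i hi
      rcases Finset.mem_insert.mp hi with rfl | hi
      · exact hn₀
      · exact (Finset.mem_filter.mp hi).2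
    obtain ⟨J, hJ1, hJ2⟩ := hno T ⟨n₀, Finset.mem_insert_self _ _⟩ hTd
    refine ⟨J, hJ1, fun i hi hiN => hJ2 i ?_⟩
    exact Finset.mem_insert_of_mem (Finset.mem_filter.mpr
      ⟨Finset.mem_range.mpr (Nat.lt_succ_of_le hiN), hi⟩)
  obtain ⟨J, hJ1, hJ2⟩ := pierce_compactness B hcomp m S H
  refine hstrong ε hεpos m ⟨Set.range J, Set.finite_range J, ?_, ?_, ?_⟩
  · have : Set.range J = ↑(Finset.univ.image J) := by simp
    rw [this, Set.ncard_coe_finset]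
    exact le_trans Finset.card_image_le (by simp)
  · rintro _ ⟨t, rfl⟩; exact hJ1 t
  · intro n hn
    obtain ⟨t, ht⟩ := hJ2 n hn
    exact ⟨J t, Set.mem_range_self t, ht⟩

/-- At a strong point `x₀`, one can extract a sequence of members whose centers converge to
`x₀` and which cannot be pierced by finitely many `k`-flats. -/
theorem strong_point_gives_unpierceable_sequence (d k : ℕ)
    (B : ℕ → Set (EuclideanSpace ℝ (Fin d))) (ctr : ℕ → EuclideanSpace ℝ (Fin d))
    (hcomp : ∀ n, IsCompact (B n)) (hne : ∀ n, (B n).Nonempty)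
    (x₀ : EuclideanSpace ℝ (Fin d))
    (hstrong : ∀ ε > 0, ∀ m : ℕ,
      ¬ ∃ P : Set (AffineSubspace ℝ (EuclideanSpace ℝ (Fin d))),
        P.Finite ∧ P.ncard ≤ m ∧ (∀ J ∈ P, IsKFlat d k J) ∧
        ∀ n, dist (ctr n) x₀ < ε →
          ∃ J ∈ P, (B n ∩ (J : Set (EuclideanSpace ℝ (Fin d)))).Nonempty) :
    ∃ g : ℕ → ℕ,
      Filter.Tendsto (fun n => ctr (g n)) Filter.atTop (nhds x₀) ∧
      ¬ ∃ P : Set (AffineSubspace ℝ (EuclideanSpace ℝ (Fin d))),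
        P.Finite ∧ (∀ J ∈ P, IsKFlat d k J) ∧
        ∀ n, ∃ J ∈ P, (B (g n) ∩ (J : Set (EuclideanSpace ℝ (Fin d)))).Nonempty := by
  choose T hTne hTd hTw using exists_witness B ctr hcomp x₀ hstrong
  set Lst : ℕ → List ℕ := fun m => (T m).toList with hLst
  have hLne : ∀ m, (Lst m).length ≥ 1 := by
    intro m
    rw [hLst]
    simp only [Finset.length_toList]
    exact Finset.card_pos.mpr (hTne m)
  set C : ℕ → List ℕ := fun m => Nat.rec (Lst 0) (fun m acc => acc ++ Lst (m+1)) m with hC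
  have hCsucc : ∀ m, C (m+1) = C m ++ Lst (m+1) := fun m => rfl
  have hClen : ∀ m, m + 1 ≤ (C m).length := by
    intro m
    induction m with
    | zero => exact hLne 0
    | succ m ih =>
      rw [hCsucc, List.length_append]
      have := hLne (m+1)
      omega
  have hCpre : ∀ a b, a ≤ b → C a <+: C b := by
    intro a b hab
    induction b with
    | zero => rw [Nat.le_zero.mp hab]
    | succ b ih =>
      rcases Nat.lt_or_ge a (b+1) with h | h
      · exact (ih (Nat.lt_succ_iff.mp h)).trans ((hCsucc b) ▸ List.prefix_append _ _)
      · rw [Nat.le_antisymm hab h]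
  set g : ℕ → ℕ := fun n => (C n).getD n 0 with hg
  have keyget : ∀ m n (h : n < (C m).length), g n = (C m)[n] := by
    intro m n h
    rcases Nat.le_total n m with hnm | hmn
    · have h1 : n < (C n).length := lt_of_lt_of_le (Nat.lt_succ_self n) (hClen n)
      rw [hg]
      simp only
      rw [List.getD_eq_getElem _ _ h1]
      exact (hCpre n m hnm).getElem h1
    · have h1 : n < (C n).length := lt_of_lt_of_le h ((hCpre m n hmn).length_le)
      rw [hg]
      simp only
      rw [List.getD_eq_getElem _ _ h1]
      exact ((hCpre m n hmn).getElem h).symm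
  have hsub : ∀ m, ∀ i ∈ T m, ∃ n, g n = i := by
    intro m i hi
    have hiC : i ∈ C m := by
      cases m with
      | zero => exact Finset.mem_toList.mpr hi
      | succ m =>
        rw [hCsucc]
        exact List.mem_append_right _ (Finset.mem_toList.mpr hi)
    obtain ⟨⟨n, hn⟩, hget⟩ := List.mem_iff_get.mp hiC
    exact ⟨n, by rw [keyget m n hn]; simpa using hget⟩
  -- distance bound for the tail
  have htail : ∀ m j, m ≤ j → ∀ n, (C m).length ≤ n → (h : n < (C j).length) →
      dist (ctr ((C j)[n])) x₀ < 1/(m+2) := by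
    intro m j hmj
    induction j with
    | zero =>
      intro n h1 h2
      have : m = 0 := Nat.le_zero.mp hmj
      subst this
      omega
    | succ j ih =>
      intro n h1 h2
      rcases Nat.lt_or_ge n (C j).length with h | h
      · rcases Nat.lt_or_ge j m with hjm | hmj'
        · -- m = j+1; then n < (C j).length but (C m).length = (C (j+1)).length ≤ n contradiction
          have : m = j + 1 := Nat.le_antisymm hmj hjm
          subst this
          omega
        · have := ih hmj' n h1 h
          have e : (C (j+1))[n]'h2 = (C j)[n]'h := List.getElem_append_left h
          rw [e]
          exact this
      · rcases Nat.lt_or_ge j m with hjm | hmj'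
        · have hm1 : m = j + 1 := Nat.le_antisymm hmj hjm
          rw [hm1] at h1
          omega
        have hlt : n - (C j).length < (Lst (j+1)).length := by
          have := h2
          rw [hCsucc, List.length_append] at this
          omega
        have e : (C (j+1))[n]'h2 = (Lst (j+1))[n - (C j).length]'hlt :=
          List.getElem_append_right h
        rw [e]
        have hmem : (Lst (j+1))[n - (C j).length]'(by
            rw [hCsucc, List.length_append] at h2; omega) ∈ Lst (j+1) :=
          List.getElem_mem _
        have hmemT : (Lst (j+1))[n - (C j).length]'(by
            rw [hCsucc, List.length_append] at h2; omega) ∈ T (j+1) :=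
          Finset.mem_toList.mp hmem
        have hd := hTd (j+1) _ hmemT
        have : (1:ℝ)/(j+1+1) ≤ 1/(m+2) := by
          apply one_div_le_one_div_of_le
          · positivity
          · have : (m:ℝ) ≤ j := by exact_mod_cast hmj'
            push_cast
            linarith
        calc dist (ctr _) x₀ < 1/(j+1+1) := by exact_mod_cast hd
          _ ≤ 1/(m+2) := this
  refine ⟨g, ?_, ?_⟩
  · rw [Metric.tendsto_atTop]
    intro ε hε
    obtain ⟨m, hm⟩ := exists_nat_one_div_lt hε
    refine ⟨(C m).length, fun n hn => ?_⟩
    have hmn : m ≤ n := le_trans (Nat.le_of_succ_le (hClen m)) hn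
    have h1 : n < (C n).length := lt_of_lt_of_le (Nat.lt_succ_self n) (hClen n)
    rw [show g n = (C n)[n] from keyget n n h1]
    calc dist (ctr ((C n)[n])) x₀ < 1/(m+2) := htail m n hmn n hn h1
      _ ≤ 1/(m+1) := by
        apply one_div_le_one_div_of_le <;> [positivity; (push_cast; linarith)]
      _ < ε := hm
  · rintro ⟨P, hPfin, hPk, hPp⟩
    rcases P.eq_empty_or_nonempty with rfl | ⟨j₀, hj₀⟩
    · obtain ⟨J, hJ, _⟩ := hPp 0
      exact absurd hJ (Set.notMem_empty J)
    set m := P.ncard with hm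
    set lst := hPfin.toFinset.toList with hlst
    have hlen : lst.length = m := by
      rw [hlst, Finset.length_toList, hm, Set.ncard_eq_toFinset_card P hPfin]
    refine hTw m ⟨fun t => lst.get (Fin.cast hlen.symm t), fun t => ?_, fun i hi => ?_⟩
    · exact hPk _ (hPfin.mem_toFinset.mp (Finset.mem_toList.mp (List.get_mem _ _)))
    · obtain ⟨n, hn⟩ := hsub m i hi
      obtain ⟨Jp, hJpP, hJpm⟩ := hPp n
      have hJplst : Jp ∈ lst := by
        rw [hlst, Finset.mem_toList, Set.Finite.mem_toFinset]; exact hJpP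
      obtain ⟨t, ht⟩ := List.mem_iff_get.mp hJplst
      refine ⟨Fin.cast hlen t, ?_⟩
      show (B i ∩ ↑(lst.get (Fin.cast hlen.symm (Fin.cast hlen t)))).Nonempty
      have hcast : Fin.cast hlen.symm (Fin.cast hlen t) = t := rfl
      rw [hcast, ht, ← hn]
      exact hJpm
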